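/- Let 0 < q ≤ 1 and φ ∈ ℝ, and work in SU_{q,φ}(2). Define E₁ := (1+q²) q⁻¹ e^{4iφ} c⋆ a⋆, E₀ := 1 − (1+q²) c⋆ c, E₋₁ := (1+q²) q⁻¹ e^{−4iφ} a c, and set λ := 1 − q⁴, ρ := 1 + q². Then these elements satisfy the Podleś sphere relations: (1+q²) E₀ E₁ − q²(1+q²) E₁ E₀ = λ E₁; q² (E₁ E₋₁ − E₋₁ E₁) + (1 − q⁴) E₀ E₀ = λ E₀; (1+q²) E₋₁ E₀ − q²(1+q²) E₀ E₋₁ = λ E₋₁; and E₋₁ E₁ + (1+q²) E₀ E₀ + q² E₁ E₋₁ = ρ · 1. -/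

import Mathlib

noncomputable section

open Complex

/-- The defining relations of `SU_{q,φ}(2)` on the free `ℂ`-algebra with four generators
`a = ι 0`, `a⋆ = ι 1`, `c = ι 2`, `c⋆ = ι 3`. -/
inductive SUqRel (q φ : ℝ) : FreeAlgebra ℂ (Fin 4) → FreeAlgebra ℂ (Fin 4) → Prop
  | ac : SUqRel q φ (FreeAlgebra.ι ℂ 0 * FreeAlgebra.ι ℂ 2)
      (((q : ℂ) * Complex.exp (4 * Complex.I * (φ : ℂ))) •
        (FreeAlgebra.ι ℂ 2 * FreeAlgebra.ι ℂ 0))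
  | acs : SUqRel q φ (FreeAlgebra.ι ℂ 0 * FreeAlgebra.ι ℂ 3)
      (((q : ℂ) * Complex.exp (-4 * Complex.I * (φ : ℂ))) •
        (FreeAlgebra.ι ℂ 3 * FreeAlgebra.ι ℂ 0))
  | cas : SUqRel q φ (FreeAlgebra.ι ℂ 2 * FreeAlgebra.ι ℂ 1)
      (((q : ℂ) * Complex.exp (4 * Complex.I * (φ : ℂ))) •
        (FreeAlgebra.ι ℂ 1 * FreeAlgebra.ι ℂ 2))
  | csas : SUqRel q φ (FreeAlgebra.ι ℂ 3 * FreeAlgebra.ι ℂ 1)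
      (((q : ℂ) * Complex.exp (-4 * Complex.I * (φ : ℂ))) •
        (FreeAlgebra.ι ℂ 1 * FreeAlgebra.ι ℂ 3))
  | unitary₁ : SUqRel q φ
      (FreeAlgebra.ι ℂ 0 * FreeAlgebra.ι ℂ 1 +
        ((q : ℂ) ^ 2) • (FreeAlgebra.ι ℂ 3 * FreeAlgebra.ι ℂ 2)) 1
  | unitary₂ : SUqRel q φ
      (FreeAlgebra.ι ℂ 1 * FreeAlgebra.ι ℂ 0 + FreeAlgebra.ι ℂ 2 * FreeAlgebra.ι ℂ 3) 1
  | ccs : SUqRel q φ (FreeAlgebra.ι ℂ 2 * FreeAlgebra.ι ℂ 3)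
      (FreeAlgebra.ι ℂ 3 * FreeAlgebra.ι ℂ 2)

/-- The braided quantum group `SU_{q,φ}(2)` as a quotient of the free algebra. -/
def SUq2 (q φ : ℝ) : Type := RingQuot (SUqRel q φ)

instance (q φ : ℝ) : Ring (SUq2 q φ) := inferInstanceAs (Ring (RingQuot (SUqRel q φ)))

instance (q φ : ℝ) : Algebra ℂ (SUq2 q φ) :=
  inferInstanceAs (Algebra ℂ (RingQuot (SUqRel q φ)))

/-- The generator `a` of `SU_{q,φ}(2)`. -/
def SUq2.a (q φ : ℝ) : SUq2 q φ := RingQuot.mkAlgHom ℂ (SUqRel q φ) (FreeAlgebra.ι ℂ 0)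

/-- The generator `a⋆` of `SU_{q,φ}(2)`. -/
def SUq2.aStar (q φ : ℝ) : SUq2 q φ := RingQuot.mkAlgHom ℂ (SUqRel q φ) (FreeAlgebra.ι ℂ 1)

/-- The generator `c` of `SU_{q,φ}(2)`. -/
def SUq2.c (q φ : ℝ) : SUq2 q φ := RingQuot.mkAlgHom ℂ (SUqRel q φ) (FreeAlgebra.ι ℂ 2)

/-- The generator `c⋆` of `SU_{q,φ}(2)`. -/
def SUq2.cStar (q φ : ℝ) : SUq2 q φ := RingQuot.mkAlgHom ℂ (SUqRel q φ) (FreeAlgebra.ι ℂ 3)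

/-- `E₁ := (1+q²) q⁻¹ e^{4iφ} c⋆ a⋆`. -/
def SUq2.E₁ (q φ : ℝ) : SUq2 q φ :=
  ((1 + (q : ℂ) ^ 2) * (q : ℂ)⁻¹ * Complex.exp (4 * Complex.I * (φ : ℂ))) •
    (SUq2.cStar q φ * SUq2.aStar q φ)

/-- `E₀ := 1 − (1+q²) c⋆ c`. -/
def SUq2.E₀ (q φ : ℝ) : SUq2 q φ :=
  1 - (1 + (q : ℂ) ^ 2) • (SUq2.cStar q φ * SUq2.c q φ)

/-- `E₋₁ := (1+q²) q⁻¹ e^{−4iφ} a c`. -/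
def SUq2.Eneg (q φ : ℝ) : SUq2 q φ :=
  ((1 + (q : ℂ) ^ 2) * (q : ℂ)⁻¹ * Complex.exp (-4 * Complex.I * (φ : ℂ))) •
    (SUq2.a q φ * SUq2.c q φ)

set_option maxHeartbeats 2000000 in
theorem podles_abstract {R : Type*} [Ring R] [Algebra ℂ R]
    (A As C Cs : R) (κ e : ℂ) (hκ : κ ≠ 0) (he : e ≠ 0)
    (h1 : A*C = (κ*e) • (C*A))
    (h2 : A*Cs = (κ*e⁻¹) • (Cs*A))
    (h3 : C*As = (κ*e) • (As*C))
    (h4 : Cs*As = (κ*e⁻¹) • (As*Cs))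
    (h5 : A*As + (κ^2) • (Cs*C) = 1)
    (h6 : As*A + C*Cs = 1)
    (h7 : C*Cs = Cs*C) :
    ((1+κ^2) • ((1 - (1+κ^2)•(Cs*C)) * (((1+κ^2)*κ⁻¹*e) • (Cs*As))) -
        (κ^2*(1+κ^2)) • ((((1+κ^2)*κ⁻¹*e) • (Cs*As)) * (1 - (1+κ^2)•(Cs*C))) =
      (1-κ^4) • (((1+κ^2)*κ⁻¹*e) • (Cs*As))) ∧
    ((κ^2) • ((((1+κ^2)*κ⁻¹*e) • (Cs*As)) * (((1+κ^2)*κ⁻¹*e⁻¹) • (A*C)) -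
          (((1+κ^2)*κ⁻¹*e⁻¹) • (A*C)) * (((1+κ^2)*κ⁻¹*e) • (Cs*As))) +
        (1-κ^4) • ((1 - (1+κ^2)•(Cs*C)) * (1 - (1+κ^2)•(Cs*C))) =
      (1-κ^4) • (1 - (1+κ^2)•(Cs*C))) ∧
    ((1+κ^2) • ((((1+κ^2)*κ⁻¹*e⁻¹) • (A*C)) * (1 - (1+κ^2)•(Cs*C))) -
        (κ^2*(1+κ^2)) • ((1 - (1+κ^2)•(Cs*C)) * (((1+κ^2)*κ⁻¹*e⁻¹) • (A*C))) =
      (1-κ^4) • (((1+κ^2)*κ⁻¹*e⁻¹) • (A*C))) ∧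
    ((((1+κ^2)*κ⁻¹*e⁻¹) • (A*C)) * (((1+κ^2)*κ⁻¹*e) • (Cs*As)) +
        (1+κ^2) • ((1 - (1+κ^2)•(Cs*C)) * (1 - (1+κ^2)•(Cs*C))) +
        (κ^2) • ((((1+κ^2)*κ⁻¹*e) • (Cs*As)) * (((1+κ^2)*κ⁻¹*e⁻¹) • (A*C))) =
      (1+κ^2) • (1 : R)) := by
  have hκe : κ * e ≠ 0 := mul_ne_zero hκ he
  have d3 : As*C = (κ⁻¹*e⁻¹) • (C*As) := by
    rw [h3, smul_smul]
    have : κ⁻¹*e⁻¹*(κ*e) = 1 := by field_simp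
    rw [this, one_smul]
  have d4 : As*Cs = (κ⁻¹*e) • (Cs*As) := by
    rw [h4, smul_smul]
    have : κ⁻¹*e*(κ*e⁻¹) = 1 := by field_simp
    rw [this, one_smul]
  have h5' : A*As = 1 - (κ^2) • (Cs*C) := eq_sub_of_add_eq h5
  have h6' : As*A = 1 - Cs*C := by rw [← h7]; exact eq_sub_of_add_eq h6
  have g1 : ∀ r : R, A*(C*r) = (κ*e) • (C*(A*r)) := fun r => by
    rw [← mul_assoc, h1, smul_mul_assoc, mul_assoc]
  have g2 : ∀ r : R, A*(Cs*r) = (κ*e⁻¹) • (Cs*(A*r)) := fun r => by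
    rw [← mul_assoc, h2, smul_mul_assoc, mul_assoc]
  have g3 : ∀ r : R, C*(As*r) = (κ*e) • (As*(C*r)) := fun r => by
    rw [← mul_assoc, h3, smul_mul_assoc, mul_assoc]
  have g4 : ∀ r : R, Cs*(As*r) = (κ*e⁻¹) • (As*(Cs*r)) := fun r => by
    rw [← mul_assoc, h4, smul_mul_assoc, mul_assoc]
  have gd3 : ∀ r : R, As*(C*r) = (κ⁻¹*e⁻¹) • (C*(As*r)) := fun r => by
    rw [← mul_assoc, d3, smul_mul_assoc, mul_assoc]
  have gd4 : ∀ r : R, As*(Cs*r) = (κ⁻¹*e) • (Cs*(As*r)) := fun r => by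
    rw [← mul_assoc, d4, smul_mul_assoc, mul_assoc]
  have g5 : ∀ r : R, A*(As*r) = r - (κ^2) • (Cs*(C*r)) := fun r => by
    rw [← mul_assoc, h5', sub_mul, one_mul, smul_mul_assoc, mul_assoc]
  have g6 : ∀ r : R, As*(A*r) = r - Cs*(C*r) := fun r => by
    rw [← mul_assoc, h6', sub_mul, one_mul, mul_assoc]
  have g7 : ∀ r : R, C*(Cs*r) = Cs*(C*r) := fun r => by
    rw [← mul_assoc, h7, mul_assoc]
  refine ⟨?_, ?_, ?_, ?_⟩ <;>
  · simp only [mul_sub, sub_mul, mul_add, add_mul, mul_one, one_mul, smul_sub, smul_add,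
      smul_mul_assoc, mul_smul_comm, smul_smul, mul_assoc,
      h1, g1, h2, g2, d3, gd3, d4, gd4, h5', g5, h6', g6, h7, g7]
    match_scalars <;> (field_simp; try ring)

/-- The elements `E₁ = (1+q²)q⁻¹e^{4iφ} c⋆a⋆`, `E₀ = 1 − (1+q²)c⋆c`,
`E₋₁ = (1+q²)q⁻¹e^{−4iφ} ac` of `SU_{q,φ}(2)` satisfy the relations of the Podleś sphere
with `λ = 1 − q⁴` and `ρ = 1 + q²`. -/
theorem podles_relations_in_SUq2 (q φ : ℝ) (hq0 : 0 < q) (hq1 : q ≤ 1) :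
    ((1 + (q : ℂ) ^ 2) • (SUq2.E₀ q φ * SUq2.E₁ q φ) -
        ((q : ℂ) ^ 2 * (1 + (q : ℂ) ^ 2)) • (SUq2.E₁ q φ * SUq2.E₀ q φ) =
      (1 - (q : ℂ) ^ 4) • SUq2.E₁ q φ) ∧
    (((q : ℂ) ^ 2) • (SUq2.E₁ q φ * SUq2.Eneg q φ - SUq2.Eneg q φ * SUq2.E₁ q φ) +
        (1 - (q : ℂ) ^ 4) • (SUq2.E₀ q φ * SUq2.E₀ q φ) =
      (1 - (q : ℂ) ^ 4) • SUq2.E₀ q φ) ∧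
    ((1 + (q : ℂ) ^ 2) • (SUq2.Eneg q φ * SUq2.E₀ q φ) -
        ((q : ℂ) ^ 2 * (1 + (q : ℂ) ^ 2)) • (SUq2.E₀ q φ * SUq2.Eneg q φ) =
      (1 - (q : ℂ) ^ 4) • SUq2.Eneg q φ) ∧
    (SUq2.Eneg q φ * SUq2.E₁ q φ + (1 + (q : ℂ) ^ 2) • (SUq2.E₀ q φ * SUq2.E₀ q φ) +
        ((q : ℂ) ^ 2) • (SUq2.E₁ q φ * SUq2.Eneg q φ) =
      (1 + (q : ℂ) ^ 2) • (1 : SUq2 q φ)) := by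
  have hκ : (q : ℂ) ≠ 0 := by exact_mod_cast hq0.ne'
  have he : Complex.exp (4 * Complex.I * (φ : ℂ)) ≠ 0 := Complex.exp_ne_zero _
  have hinv : Complex.exp (-4 * Complex.I * (φ : ℂ)) =
      (Complex.exp (4 * Complex.I * (φ : ℂ)))⁻¹ := by
    have h : (-4 : ℂ) * Complex.I * (φ : ℂ) = -(4 * Complex.I * (φ : ℂ)) := by ring
    rw [h, Complex.exp_neg]
  have h1 : SUq2.a q φ * SUq2.c q φ =
      ((q : ℂ) * Complex.exp (4 * Complex.I * (φ : ℂ))) • (SUq2.c q φ * SUq2.a q φ) := by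
    have h := RingQuot.mkAlgHom_rel ℂ (SUqRel.ac (q := q) (φ := φ))
    simp [SUq2.a, SUq2.c, map_mul, map_smul] at h; exact h
  have h2 : SUq2.a q φ * SUq2.cStar q φ =
      ((q : ℂ) * (Complex.exp (4 * Complex.I * (φ : ℂ)))⁻¹) •
        (SUq2.cStar q φ * SUq2.a q φ) := by
    have h := RingQuot.mkAlgHom_rel ℂ (SUqRel.acs (q := q) (φ := φ))
    rw [← hinv]
    simp [SUq2.a, SUq2.cStar, map_mul, map_smul] at h ⊢; exact h
  have h3 : SUq2.c q φ * SUq2.aStar q φ =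
      ((q : ℂ) * Complex.exp (4 * Complex.I * (φ : ℂ))) •
        (SUq2.aStar q φ * SUq2.c q φ) := by
    have h := RingQuot.mkAlgHom_rel ℂ (SUqRel.cas (q := q) (φ := φ))
    simp [SUq2.c, SUq2.aStar, map_mul, map_smul] at h; exact h
  have h4 : SUq2.cStar q φ * SUq2.aStar q φ =
      ((q : ℂ) * (Complex.exp (4 * Complex.I * (φ : ℂ)))⁻¹) •
        (SUq2.aStar q φ * SUq2.cStar q φ) := by
    have h := RingQuot.mkAlgHom_rel ℂ (SUqRel.csas (q := q) (φ := φ))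
    rw [← hinv]
    simp [SUq2.cStar, SUq2.aStar, map_mul, map_smul] at h ⊢; exact h
  have h5 : SUq2.a q φ * SUq2.aStar q φ + ((q : ℂ) ^ 2) • (SUq2.cStar q φ * SUq2.c q φ) = 1 := by
    have h := RingQuot.mkAlgHom_rel ℂ (SUqRel.unitary₁ (q := q) (φ := φ))
    simp [SUq2.a, SUq2.aStar, SUq2.c, SUq2.cStar, map_mul, map_smul, map_add] at h; exact h
  have h6 : SUq2.aStar q φ * SUq2.a q φ + SUq2.c q φ * SUq2.cStar q φ = 1 := by
    have h := RingQuot.mkAlgHom_rel ℂ (SUqRel.unitary₂ (q := q) (φ := φ))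
    simp [SUq2.a, SUq2.aStar, SUq2.c, SUq2.cStar, map_mul, map_add] at h; exact h
  have h7 : SUq2.c q φ * SUq2.cStar q φ = SUq2.cStar q φ * SUq2.c q φ := by
    have h := RingQuot.mkAlgHom_rel ℂ (SUqRel.ccs (q := q) (φ := φ))
    simp [SUq2.c, SUq2.cStar, map_mul] at h; exact h
  simp only [SUq2.E₁, SUq2.E₀, SUq2.Eneg, hinv]
  exact podles_abstract (SUq2.a q φ) (SUq2.aStar q φ) (SUq2.c q φ) (SUq2.cStar q φ)
    (q : ℂ) (Complex.exp (4 * Complex.I * (φ : ℂ))) hκ he h1 h2 h3 h4 h5 h6 h7
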